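/- arXiv:1309.4912 — 8 statements merged into one kernel-verified Lean document; each statement's English description precedes it below -/
import Mathlib

section
/- Let h : J → J be a continuous involution on an open interval J containing 0 with h(0) = 0 and h ≠ id. Then k(x) := x − h(x) is a strictly increasing homeomorphism from J onto an open interval I = k(J), and I is symmetric about 0 (y ∈ I implies −y ∈ I). -/
theorem involution_k_homeomorphism
    (J : Set ℝ) (hJopen : IsOpen J) (hJconn : J.OrdConnected) (h0J : (0:ℝ) ∈ J)
    (h : ℝ → ℝ) (hmaps : Set.MapsTo h J J)
    (hcont : ContinuousOn h J)
    (hinv : ∀ x ∈ J, h (h x) = x)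
    (h0 : h 0 = 0)
    (hne : ∃ x ∈ J, h x ≠ x)
    (k : ℝ → ℝ) (hk : ∀ x, k x = x - h x) :
    StrictMonoOn k J ∧ ContinuousOn k J ∧ IsOpen (k '' J) ∧ (k '' J).OrdConnected ∧
    (∃ g : ℝ → ℝ, ContinuousOn g (k '' J) ∧ (∀ x ∈ J, g (k x) = x) ∧ ∀ y ∈ k '' J, k (g y) = y) ∧
    (∀ y ∈ k '' J, -y ∈ k '' J) := by
  obtain ⟨z, hzJ, hzne⟩ := hne
  have hhzJ : h z ∈ J := hmaps hzJ
  have hinj : Set.InjOn h J := by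
    intro a ha b hb hab
    have := hinv a ha
    rw [hab, hinv b hb] at this
    exact this.symm
  have memmin : ∀ a ∈ J, ∀ b ∈ J, min a b ∈ J := by
    intro a ha b hb
    rcases le_total a b with hab | hab
    · rwa [min_eq_left hab]
    · rwa [min_eq_right hab]
  have memmax : ∀ a ∈ J, ∀ b ∈ J, max a b ∈ J := by
    intro a ha b hb
    rcases le_total a b with hab | hab
    · rwa [max_eq_right hab]
    · rwa [max_eq_left hab]
  -- h is strictly decreasing (pairwise)
  have hanti : ∀ x ∈ J, ∀ y ∈ J, x < y → h y < h x := by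
    intro x hx y hy hxy
    set lo := min x (min z (h z)) with hlo
    set hi := max y (max z (h z)) with hhi
    have hloJ : lo ∈ J := memmin x hx _ (memmin z hzJ _ hhzJ)
    have hhiJ : hi ∈ J := memmax y hy _ (memmax z hzJ _ hhzJ)
    have hsub : Set.Icc lo hi ⊆ J := hJconn.out hloJ hhiJ
    have hxm : x ∈ Set.Icc lo hi :=
      ⟨min_le_left _ _, le_trans (le_trans hxy.le (le_max_left _ _)) le_rfl⟩
    have hym : y ∈ Set.Icc lo hi :=
      ⟨le_trans (min_le_left _ _) hxy.le, le_max_left _ _⟩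
    have hzm : z ∈ Set.Icc lo hi :=
      ⟨le_trans (min_le_right _ _) (min_le_left _ _),
        le_trans (le_max_left _ _) (le_max_right _ _)⟩
    have hhzm : h z ∈ Set.Icc lo hi :=
      ⟨le_trans (min_le_right _ _) (min_le_right _ _),
        le_trans (le_max_right _ _) (le_max_right _ _)⟩
    have hlohi : lo ≤ hi := hxm.1.trans hxm.2
    rcases ContinuousOn.strictMonoOn_of_injOn_Icc' hlohi (hcont.mono hsub)
        (hinj.mono hsub) with hmono | hanti
    · exfalso
      rcases lt_trichotomy z (h z) with hlt | heq | hgt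
      · have := hmono hzm hhzm hlt
        rw [hinv z hzJ] at this
        exact absurd (hlt.trans this) (lt_irrefl _)
      · exact hzne heq.symm
      · have := hmono hhzm hzm hgt
        rw [hinv z hzJ] at this
        exact absurd (this.trans hgt) (lt_irrefl _)
    · exact hanti hxm hym hxy
  have hkmono : StrictMonoOn k J := by
    intro a ha b hb hab
    rw [hk, hk]
    have := hanti a ha b hb hab
    linarith
  have hkcont : ContinuousOn k J := by
    have : k = fun x => x - h x := funext hk
    rw [this]
    exact continuousOn_id.sub hcont
  -- openness of k '' J
  have hopen : IsOpen (k '' J) := by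
    rw [isOpen_iff_mem_nhds]
    rintro y ⟨x, hx, rfl⟩
    obtain ⟨ε, hε, hball⟩ := Metric.isOpen_iff.1 hJopen x hx
    have haJ : x - ε / 2 ∈ J := by
      apply hball
      rw [Metric.mem_ball, Real.dist_eq, abs_lt]
      constructor <;> linarith
    have hbJ : x + ε / 2 ∈ J := by
      apply hball
      rw [Metric.mem_ball, Real.dist_eq, abs_lt]
      constructor <;> linarith
    have hab : x - ε / 2 ≤ x + ε / 2 := by linarith
    have hsub : Set.Icc (x - ε / 2) (x + ε / 2) ⊆ J :=
      hJconn.out haJ hbJ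
    have hivt : Set.Icc (k (x - ε / 2)) (k (x + ε / 2)) ⊆ k '' Set.Icc (x - ε / 2) (x + ε / 2) :=
      intermediate_value_Icc hab (hkcont.mono hsub)
    have h1 : k (x - ε / 2) < k x := hkmono haJ hx (by linarith)
    have h2 : k x < k (x + ε / 2) := hkmono hx hbJ (by linarith)
    apply Filter.mem_of_superset (Ioo_mem_nhds h1 h2)
    exact fun w hw => (hivt (Set.Ioo_subset_Icc_self hw)).imp
      fun c hc => ⟨hsub hc.1, hc.2⟩
  -- ord connected
  have hordconn : (k '' J).OrdConnected := by
    rw [Set.ordConnected_iff]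
    rintro _ ⟨a, ha, rfl⟩ _ ⟨b, hb, rfl⟩ hab
    have haleb : a ≤ b := (hkmono.le_iff_le ha hb).1 hab
    have hsub : Set.Icc a b ⊆ J := hJconn.out ha hb
    intro w hw
    obtain ⟨c, hc, hcw⟩ := intermediate_value_Icc haleb (hkcont.mono hsub) hw
    exact ⟨c, hsub hc, hcw⟩
  -- inverse
  set g := Function.invFunOn k J with hg
  have hkinj : Set.InjOn k J := hkmono.injOn
  have hleft : ∀ x ∈ J, g (k x) = x := fun x hx => hkinj.leftInvOn_invFunOn hx
  have hright : ∀ y ∈ k '' J, k (g y) = y := by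
    rintro y ⟨x, hx, rfl⟩
    rw [hleft x hx]
  have himg : g '' (k '' J) = J := by
    apply Set.Subset.antisymm
    · rintro _ ⟨_, ⟨x, hx, rfl⟩, rfl⟩
      rw [hleft x hx]; exact hx
    · intro x hx
      exact ⟨k x, ⟨x, hx, rfl⟩, hleft x hx⟩
  have hgmono : StrictMonoOn g (k '' J) := by
    rintro _ ⟨a, ha, rfl⟩ _ ⟨b, hb, rfl⟩ hab
    rw [hleft a ha, hleft b hb]
    exact (hkmono.lt_iff_lt ha hb).1 hab
  have hgcont : ContinuousOn g (k '' J) := by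
    intro y hy
    apply ContinuousAt.continuousWithinAt
    apply hgmono.continuousAt_of_image_mem_nhds (hopen.mem_nhds hy)
    rw [himg]
    apply hJopen.mem_nhds
    rw [← himg]
    exact ⟨y, hy, rfl⟩
  refine ⟨hkmono, hkcont, hopen, hordconn, ⟨g, hgcont, hleft, hright⟩, ?_⟩
  rintro _ ⟨x, hx, rfl⟩
  refine ⟨h x, hmaps hx, ?_⟩
  rw [hk, hk, hinv x hx]
  ring
end

section
/- Let h : J → J be a continuous involution on an open interval J ∋ 0 with h(0) = 0, h ≠ id, and let k(x) = x − h(x), I = k(J). Then the function P : I → ℝ defined by P(y) = 2 k⁻¹(y) − y satisfies P(0) = 0 and P(−y) = P(y) for all y ∈ I. -/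
theorem involution_P_even
    (J : Set ℝ) (hJopen : IsOpen J) (hJconn : J.OrdConnected) (h0J : (0:ℝ) ∈ J)
    (h : ℝ → ℝ) (hmaps : Set.MapsTo h J J)
    (hcont : ContinuousOn h J)
    (hinv : ∀ x ∈ J, h (h x) = x)
    (h0 : h 0 = 0)
    (hne : ∃ x ∈ J, h x ≠ x)
    (k kinv : ℝ → ℝ) (hk : ∀ x, k x = x - h x)
    (hkinv_maps : Set.MapsTo kinv (k '' J) J)
    (hkinv_left : ∀ x ∈ J, kinv (k x) = x)
    (hkinv_right : ∀ y ∈ k '' J, k (kinv y) = y)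
    (P : ℝ → ℝ) (hP : ∀ y, P y = 2 * kinv y - y) :
    P 0 = 0 ∧ ∀ y ∈ k '' J, P (-y) = P y := by
  have hk0 : k 0 = 0 := by rw [hk, h0]; ring
  constructor
  · have := hkinv_left 0 h0J
    rw [hk0] at this
    rw [hP, this]; ring
  · rintro y ⟨x, hxJ, rfl⟩
    have hneg : k (h x) = -(k x) := by
      rw [hk, hk, hinv x hxJ]; ring
    have h1 : kinv (k x) = x := hkinv_left x hxJ
    have h2 : kinv (-(k x)) = h x := by
      rw [← hneg, hkinv_left (h x) (hmaps hxJ)]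
    rw [hP, hP, h1, h2, hk]; ring
end

section
/- Let P : I → ℝ be a continuous even function on a symmetric open interval I with P(0) = 0, and suppose K(y) = (y + P(y))/2 is a homeomorphism from I onto an interval J. Then h(x) := x − K⁻¹(x) defines a continuous involution of J: h maps J onto J, h∘h = id, h(0) = 0, and h ≠ id. -/
theorem even_P_gives_involution
    (I : Set ℝ) (hIopen : IsOpen I) (hIconn : I.OrdConnected) (h0I : (0:ℝ) ∈ I)
    (hIsym : ∀ y ∈ I, -y ∈ I)
    (P : ℝ → ℝ) (hPcont : ContinuousOn P I)
    (hPeven : ∀ y ∈ I, P (-y) = P y) (hP0 : P 0 = 0)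
    (K Kinv : ℝ → ℝ) (hK : ∀ y, K y = (y + P y) / 2)
    (hKinv_maps : Set.MapsTo Kinv (K '' I) I)
    (hKinv_cont : ContinuousOn Kinv (K '' I))
    (hKinv_left : ∀ y ∈ I, Kinv (K y) = y)
    (hKinv_right : ∀ x ∈ K '' I, K (Kinv x) = x)
    (h : ℝ → ℝ) (hh : ∀ x, h x = x - Kinv x) :
    Set.MapsTo h (K '' I) (K '' I) ∧
    h '' (K '' I) = K '' I ∧
    ContinuousOn h (K '' I) ∧
    (∀ x ∈ K '' I, h (h x) = x) ∧
    h 0 = 0 ∧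
    (∃ x ∈ K '' I, h x ≠ x) := by
  -- key: h (K y) = K (-y) for y ∈ I
  have key : ∀ y ∈ I, h (K y) = K (-y) := by
    intro y hy
    rw [hh, hKinv_left y hy, hK, hK, hPeven y hy]
    ring
  have hK0 : K 0 = 0 := by rw [hK, hP0]; ring
  have maps : Set.MapsTo h (K '' I) (K '' I) := by
    rintro x ⟨y, hy, rfl⟩
    rw [key y hy]
    exact ⟨-y, hIsym y hy, rfl⟩
  have inv : ∀ x ∈ K '' I, h (h x) = x := by
    rintro x ⟨y, hy, rfl⟩
    rw [key y hy, key (-y) (hIsym y hy), neg_neg]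
  refine ⟨maps, ?_, ?_, inv, ?_, ?_⟩
  · apply Set.Subset.antisymm (Set.mapsTo_iff_image_subset.mp maps)
    rintro x ⟨y, hy, rfl⟩
    exact ⟨K (-y), ⟨-y, hIsym y hy, rfl⟩, by rw [key (-y) (hIsym y hy), neg_neg]⟩
  · have : ContinuousOn (fun x => x - Kinv x) (K '' I) :=
      continuousOn_id.sub hKinv_cont
    exact this.congr fun x _ => hh x
  · have : h (K 0) = K (-0) := key 0 h0I
    simpa [hK0] using this
  · obtain ⟨ε, hε, hball⟩ := Metric.isOpen_iff.mp hIopen 0 h0I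
    have hyI : (ε/2) ∈ I := by
      apply hball
      simp [Real.dist_eq, abs_of_pos, hε]
    refine ⟨K (ε/2), ⟨ε/2, hyI, rfl⟩, ?_⟩
    rw [key _ hyI]
    intro hEq
    have h1 : Kinv (K (-(ε/2))) = Kinv (K (ε/2)) := by rw [hEq]
    rw [hKinv_left _ (hIsym _ hyI), hKinv_left _ hyI] at h1
    linarith
end

section
/- Let h : J → J be a continuous involution on an open interval J ∋ 0 with h(0) = 0, h ≠ id, and I = {x − h(x) : x ∈ J}. If inf J and sup J are both finite, then I = (inf J − sup J, sup J − inf J); otherwise I = ℝ. -/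
theorem involution_image_interval
    (J : Set ℝ) (hJopen : IsOpen J) (hJconn : J.OrdConnected) (h0J : (0:ℝ) ∈ J)
    (h : ℝ → ℝ) (hmaps : Set.MapsTo h J J)
    (hcont : ContinuousOn h J)
    (hinv : ∀ x ∈ J, h (h x) = x)
    (h0 : h 0 = 0)
    (hne : ∃ x ∈ J, h x ≠ x)
    (I : Set ℝ) (hI : I = (fun x => x - h x) '' J) :
    ((BddBelow J ∧ BddAbove J) → I = Set.Ioo (sInf J - sSup J) (sSup J - sInf J)) ∧
    (¬(BddBelow J ∧ BddAbove J) → I = Set.univ) := by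
  obtain ⟨x₀, hx₀J, hx₀⟩ := hne
  have hhx₀J : h x₀ ∈ J := hmaps hx₀J
  have hJne : J.Nonempty := ⟨0, h0J⟩
  -- h is strictly antitone pointwise on J
  have anti : ∀ x ∈ J, ∀ y ∈ J, x < y → h y < h x := by
    intro x hxJ y hyJ hxy
    set m := min (min x y) (min x₀ (h x₀)) with hm
    set M := max (max x y) (max x₀ (h x₀)) with hM
    have hmJ : m ∈ J := by
      rcases min_cases (min x y) (min x₀ (h x₀)) with ⟨e, _⟩ | ⟨e, _⟩ <;>
        rw [hm, e] <;>
      first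
        | (rcases min_cases x y with ⟨e2, _⟩ | ⟨e2, _⟩ <;> rw [e2] <;> assumption)
        | (rcases min_cases x₀ (h x₀) with ⟨e2, _⟩ | ⟨e2, _⟩ <;> rw [e2] <;> assumption)
    have hMJ : M ∈ J := by
      rcases max_cases (max x y) (max x₀ (h x₀)) with ⟨e, _⟩ | ⟨e, _⟩ <;>
        rw [hM, e] <;>
      first
        | (rcases max_cases x y with ⟨e2, _⟩ | ⟨e2, _⟩ <;> rw [e2] <;> assumption)
        | (rcases max_cases x₀ (h x₀) with ⟨e2, _⟩ | ⟨e2, _⟩ <;> rw [e2] <;> assumption)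
    have hK : Set.Icc m M ⊆ J := hJconn.out hmJ hMJ
    have hxK : x ∈ Set.Icc m M :=
      ⟨le_trans (min_le_left _ _) (min_le_left _ _),
       le_trans (le_max_left _ _) (le_max_left _ _)⟩
    have hyK : y ∈ Set.Icc m M :=
      ⟨le_trans (min_le_left _ _) (min_le_right _ _),
       le_trans (le_max_right _ _) (le_max_left _ _)⟩
    have hx₀K : x₀ ∈ Set.Icc m M :=
      ⟨le_trans (min_le_right _ _) (min_le_left _ _),
       le_trans (le_max_left _ _) (le_max_right _ _)⟩
    have hhx₀K : h x₀ ∈ Set.Icc m M :=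
      ⟨le_trans (min_le_right _ _) (min_le_right _ _),
       le_trans (le_max_right _ _) (le_max_right _ _)⟩
    have hmM : m ≤ M := hxK.1.trans hxK.2
    have hinj : Set.InjOn h (Set.Icc m M) := by
      intro a ha b hb hab
      have : h (h a) = h (h b) := by rw [hab]
      rwa [hinv a (hK ha), hinv b (hK hb)] at this
    rcases ContinuousOn.strictMonoOn_of_injOn_Icc' hmM (hcont.mono hK) hinj with hmono | hanti
    · exfalso
      rcases lt_trichotomy x₀ (h x₀) with hlt | heq | hgt
      · have := hmono hx₀K hhx₀K hlt
        rw [hinv x₀ hx₀J] at this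
        exact absurd this (not_lt.mpr hlt.le)
      · exact hx₀ heq.symm
      · have := hmono hhx₀K hx₀K hgt
        rw [hinv x₀ hx₀J] at this
        exact absurd this (not_lt.mpr hgt.le)
    · exact hanti hxK hyK hxy
  have antile : ∀ x ∈ J, ∀ y ∈ J, x ≤ y → h y ≤ h x := by
    intro x hxJ y hyJ hxy
    rcases eq_or_lt_of_le hxy with rfl | hlt
    · exact le_refl _
    · exact (anti x hxJ y hyJ hlt).le
  -- IVT lemma
  have ivt : ∀ (y w₁ w₂ : ℝ), w₁ ∈ J → w₂ ∈ J → w₁ - h w₁ ≤ y → y ≤ w₂ - h w₂ →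
      y ∈ (fun x => x - h x) '' J := by
    intro y w₁ w₂ hw₁ hw₂ hy₁ hy₂
    have hsub : Set.uIcc w₁ w₂ ⊆ J := hJconn.uIcc_subset hw₁ hw₂
    have hfc : ContinuousOn (fun x => x - h x) (Set.uIcc w₁ w₂) :=
      (continuousOn_id.sub hcont).mono hsub
    have := intermediate_value_uIcc (f := fun x => x - h x) (a := w₁) (b := w₂) hfc
    have hymem : y ∈ Set.uIcc (w₁ - h w₁) (w₂ - h w₂) :=
      Set.Icc_subset_uIcc ⟨hy₁, hy₂⟩
    obtain ⟨x, hx, hfx⟩ := this hymem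
    exact ⟨x, hsub hx, hfx⟩
  -- upper bound construction
  have upper : ∀ (r u v : ℝ), u ∈ J → v ∈ J → r ≤ u - v → ∃ w ∈ J, r ≤ w - h w := by
    intro r u v huJ hvJ hr
    refine ⟨max u (h v), ?_, ?_⟩
    · rcases max_cases u (h v) with ⟨e, _⟩ | ⟨e, _⟩ <;> rw [e]
      · exact huJ
      · exact hmaps hvJ
    · have h1 : h (max u (h v)) ≤ v := by
        have := antile (h v) (hmaps hvJ) (max u (h v)) (by
          rcases max_cases u (h v) with ⟨e, _⟩ | ⟨e, _⟩ <;> rw [e]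
          · exact huJ
          · exact hmaps hvJ) (le_max_right _ _)
        rwa [hinv v hvJ] at this
      have h2 : u ≤ max u (h v) := le_max_left _ _
      linarith
  -- lower bound construction
  have lower : ∀ (r u v : ℝ), u ∈ J → v ∈ J → r ≤ u - v → ∃ w ∈ J, w - h w ≤ -r := by
    intro r u v huJ hvJ hr
    obtain ⟨w, hwJ, hw⟩ := upper r u v huJ hvJ hr
    refine ⟨h w, hmaps hwJ, ?_⟩
    rw [hinv w hwJ]
    linarith
  constructor
  · rintro ⟨hbb, hba⟩
    have hltSup : ∀ x ∈ J, x < sSup J := by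
      intro x hxJ
      obtain ⟨ε, hε, hball⟩ := Metric.isOpen_iff.mp hJopen x hxJ
      have : x + ε / 2 ∈ J := hball (Metric.mem_ball.mpr (by
        rw [Real.dist_eq]
        have e : x + ε / 2 - x = ε / 2 := by ring
        rw [e, abs_of_pos (by linarith)]; linarith))
      have := le_csSup hba this
      linarith
    have hgtInf : ∀ x ∈ J, sInf J < x := by
      intro x hxJ
      obtain ⟨ε, hε, hball⟩ := Metric.isOpen_iff.mp hJopen x hxJ
      have : x - ε / 2 ∈ J := hball (Metric.mem_ball.mpr (by
        rw [Real.dist_eq]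
        have e : x - ε / 2 - x = -(ε / 2) := by ring
        rw [e, abs_neg, abs_of_pos (by linarith)]; linarith))
      have := csInf_le hbb this
      linarith
    rw [hI]
    ext y
    simp only [Set.mem_image, Set.mem_Ioo]
    constructor
    · rintro ⟨x, hxJ, rfl⟩
      have h1 := hltSup x hxJ
      have h2 := hgtInf x hxJ
      have h3 := hltSup (h x) (hmaps hxJ)
      have h4 := hgtInf (h x) (hmaps hxJ)
      constructor <;> linarith
    · rintro ⟨hy1, hy2⟩
      obtain ⟨u, huJ, hu⟩ := exists_lt_of_lt_csSup hJne
        (by linarith : sSup J - (sSup J - sInf J - y) / 2 < sSup J)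
      obtain ⟨v, hvJ, hv⟩ := exists_lt_of_csInf_lt hJne
        (by linarith : sInf J < sInf J + (sSup J - sInf J - y) / 2)
      obtain ⟨u', hu'J, hu'⟩ := exists_lt_of_lt_csSup hJne
        (by linarith : sSup J - (sSup J - sInf J + y) / 2 < sSup J)
      obtain ⟨v', hv'J, hv'⟩ := exists_lt_of_csInf_lt hJne
        (by linarith : sInf J < sInf J + (sSup J - sInf J + y) / 2)
      obtain ⟨w₂, hw₂J, hw₂⟩ := upper y u v huJ hvJ (by linarith)
      obtain ⟨w₁, hw₁J, hw₁⟩ := lower (-y) u' v' hu'J hv'J (by linarith)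
      rw [neg_neg] at hw₁
      exact ivt y w₁ w₂ hw₁J hw₂J hw₁ hw₂
  · intro hnb
    rw [not_and_or] at hnb
    have key : ∀ r : ℝ, ∃ u ∈ J, ∃ v ∈ J, r ≤ u - v := by
      intro r
      rcases hnb with hnb | hnb
      · obtain ⟨v, hvJ, hv⟩ := not_bddBelow_iff.mp hnb (-r)
        exact ⟨0, h0J, v, hvJ, by linarith⟩
      · obtain ⟨u, huJ, hu⟩ := not_bddAbove_iff.mp hnb r
        exact ⟨u, huJ, 0, h0J, by linarith⟩
    rw [hI]
    ext y
    simp only [Set.mem_univ, iff_true]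
    obtain ⟨u, huJ, v, hvJ, huv⟩ := key y
    obtain ⟨u', hu'J, v', hv'J, hu'v'⟩ := key (-y)
    obtain ⟨w₂, hw₂J, hw₂⟩ := upper y u v huJ hvJ huv
    obtain ⟨w₁, hw₁J, hw₁⟩ := lower (-y) u' v' hu'J hv'J hu'v'
    rw [neg_neg] at hw₁
    exact ivt y w₁ w₂ hw₁J hw₂J hw₁ hw₂
end

section
/- The function h(x) = x + 4 − 4√(1 + x) maps the interval (−1, 3) onto itself, satisfies h(h(x)) = x for all x ∈ (−1, 3), h(0) = 0, and h is not the identity. -/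
lemma sqrt_aux : ∀ x ∈ Set.Ioo (-1:ℝ) 3,
    (x + 4 - 4 * Real.sqrt (1 + x)) ∈ Set.Ioo (-1:ℝ) 3 := by
  intro x ⟨hx1, hx3⟩
  have h0 : (0:ℝ) ≤ 1 + x := by linarith
  have hs : Real.sqrt (1 + x) ^ 2 = 1 + x := Real.sq_sqrt h0
  have hsp : 0 < Real.sqrt (1 + x) := Real.sqrt_pos.2 (by linarith)
  have hs2 : Real.sqrt (1 + x) < 2 := by nlinarith
  constructor <;> nlinarith

lemma sqrt_inv : ∀ x ∈ Set.Ioo (-1:ℝ) 3,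
    (x + 4 - 4 * Real.sqrt (1 + x)) + 4 - 4 * Real.sqrt (1 + (x + 4 - 4 * Real.sqrt (1 + x))) = x := by
  intro x ⟨hx1, hx3⟩
  have h0 : (0:ℝ) ≤ 1 + x := by linarith
  have hs : Real.sqrt (1 + x) ^ 2 = 1 + x := Real.sq_sqrt h0
  have hsp : 0 < Real.sqrt (1 + x) := Real.sqrt_pos.2 (by linarith)
  have hs2 : Real.sqrt (1 + x) < 2 := by nlinarith
  have key : 1 + (x + 4 - 4 * Real.sqrt (1 + x)) = (2 - Real.sqrt (1 + x)) ^ 2 := by nlinarith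
  rw [key, Real.sqrt_sq (by linarith)]
  ring

theorem sqrt_involution_on_Ioo :
    Set.MapsTo (fun x => x + 4 - 4 * Real.sqrt (1 + x)) (Set.Ioo (-1:ℝ) 3) (Set.Ioo (-1:ℝ) 3) ∧
    (fun x => x + 4 - 4 * Real.sqrt (1 + x)) '' (Set.Ioo (-1:ℝ) 3) = Set.Ioo (-1:ℝ) 3 ∧
    (∀ x ∈ Set.Ioo (-1:ℝ) 3,
      (fun x => x + 4 - 4 * Real.sqrt (1 + x)) ((fun x => x + 4 - 4 * Real.sqrt (1 + x)) x) = x) ∧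
    ((0:ℝ) + 4 - 4 * Real.sqrt (1 + 0) = 0) ∧
    (∃ x ∈ Set.Ioo (-1:ℝ) 3, x + 4 - 4 * Real.sqrt (1 + x) ≠ x) := by
  refine ⟨sqrt_aux, ?_, fun x hx => sqrt_inv x hx, ?_, ?_⟩
  · apply Set.Subset.antisymm
    · exact Set.MapsTo.image_subset sqrt_aux
    · intro y hy
      exact ⟨y + 4 - 4 * Real.sqrt (1 + y), sqrt_aux y hy, sqrt_inv y hy⟩
  · norm_num
  · refine ⟨1, by norm_num, ?_⟩
    have hs : Real.sqrt 2 ^ 2 = 2 := Real.sq_sqrt (by norm_num)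
    have hsp : 0 ≤ Real.sqrt 2 := Real.sqrt_nonneg 2
    norm_num
    intro h
    nlinarith
end

section
/- Let f : Ω → ℝ be C¹ on an open set Ω ⊆ ℝ² with (0,0) ∈ Ω, f(0,0) = 0, f symmetric (f(y,x) = f(x,y) whenever (x,y) ∈ Ω, and Ω is symmetric under swapping coordinates). Let Γ be the connected component of f⁻¹(0) containing (0,0), and suppose ∂₂f(x,y) ≠ 0 for all (x,y) ∈ Γ. Then Γ is the graph of a C¹ function h on an open interval J ∋ 0 with h(0) = 0, h'(x) < 0 on J, and h⁻¹ = h (i.e., Γ is the graph of a smooth involution). -/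
open Set Topology Filter

private def Sol (S : Set (ℝ × ℝ)) (J' : Set ℝ) (h' : ℝ → ℝ) : Prop :=
  IsOpen J' ∧ J'.OrdConnected ∧ (0:ℝ) ∈ J' ∧ ContinuousOn h' J' ∧ h' 0 = 0 ∧
    ∀ x ∈ J', (x, h' x) ∈ S

private lemma graph_subset_component {S Γ : Set (ℝ × ℝ)} {z : ℝ × ℝ}
    (hΓ : Γ = connectedComponentIn S z)
    {I : Set ℝ} {g : ℝ → ℝ} (hIoc : I.OrdConnected) (hg : ContinuousOn g I)
    (hgS : ∀ t ∈ I, (t, g t) ∈ S) {t₁ : ℝ} (ht₁ : t₁ ∈ I) (ht₁Γ : (t₁, g t₁) ∈ Γ) :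
    ∀ t ∈ I, (t, g t) ∈ Γ := by
  have hpre : IsPreconnected ((fun t => (t, g t)) '' I) :=
    hIoc.isPreconnected.image _ (continuousOn_id.prodMk hg)
  have hsub : (fun t => (t, g t)) '' I ⊆ connectedComponentIn S (t₁, g t₁) :=
    hpre.subset_connectedComponentIn ⟨t₁, ht₁, rfl⟩ (by rintro q ⟨t, ht, rfl⟩; exact hgS t ht)
  have heq : connectedComponentIn S z = connectedComponentIn S (t₁, g t₁) :=
    connectedComponentIn_eq (by rw [← hΓ]; exact ht₁Γ)
  intro t ht
  rw [hΓ, heq]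
  exact hsub ⟨t, ht, rfl⟩

private lemma agree (S Γ : Set (ℝ × ℝ))
    (key : ∀ p ∈ Γ, ∃ (U : Set (ℝ × ℝ)) (I : Set ℝ) (g : ℝ → ℝ),
        IsOpen U ∧ p ∈ U ∧ IsOpen I ∧ I.OrdConnected ∧ p.1 ∈ I ∧ ContinuousOn g I ∧
        g p.1 = p.2 ∧ (∀ t ∈ I, (t, g t) ∈ S) ∧ (∀ q ∈ S ∩ U, q.1 ∈ I ∧ q.2 = g q.1))
    (J1 J2 : Set ℝ) (h1 h2 : ℝ → ℝ)
    (hJ1o : IsOpen J1) (hJ1c : J1.OrdConnected) (hh1 : ContinuousOn h1 J1)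
    (hg1 : ∀ x ∈ J1, (x, h1 x) ∈ S) (hΓ1 : ∀ x ∈ J1, (x, h1 x) ∈ Γ)
    (hJ2o : IsOpen J2) (hJ2c : J2.OrdConnected) (hh2 : ContinuousOn h2 J2)
    (hg2 : ∀ x ∈ J2, (x, h2 x) ∈ S)
    (t₀ : ℝ) (ht₀1 : t₀ ∈ J1) (ht₀2 : t₀ ∈ J2) (heq0 : h1 t₀ = h2 t₀) :
    ∀ x, x ∈ J1 → x ∈ J2 → h1 x = h2 x := by
  set T : Set ℝ := {x | (x ∈ J1 ∧ x ∈ J2) ∧ h1 x = h2 x} with hT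
  set T' : Set ℝ := {x | (x ∈ J1 ∧ x ∈ J2) ∧ h1 x ≠ h2 x} with hT'
  have hTopen : IsOpen T := by
    rw [isOpen_iff_mem_nhds]
    rintro x ⟨⟨hx1, hx2⟩, hxe⟩
    obtain ⟨U, I, g, hUo, hpU, hIo, hIc, hxI, hgc, hgp, hgS, hSU⟩ := key (x, h1 x) (hΓ1 x hx1)
    have c1 : ContinuousAt (fun t => (t, h1 t)) x :=
      continuousAt_id.prodMk (hh1.continuousAt (hJ1o.mem_nhds hx1))
    have c2 : ContinuousAt (fun t => (t, h2 t)) x :=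
      continuousAt_id.prodMk (hh2.continuousAt (hJ2o.mem_nhds hx2))
    have m1 : ∀ᶠ t in 𝓝 x, (t, h1 t) ∈ U := c1 (hUo.mem_nhds hpU)
    have m2 : ∀ᶠ t in 𝓝 x, (t, h2 t) ∈ U := by
      refine c2 (hUo.mem_nhds ?_)
      show ((x, h2 x) : ℝ × ℝ) ∈ U
      rw [← hxe]; exact hpU
    have mJ : ∀ᶠ t in 𝓝 x, t ∈ J1 ∧ t ∈ J2 := by
      filter_upwards [hJ1o.mem_nhds hx1, hJ2o.mem_nhds hx2] with t h1 h2
      exact ⟨h1, h2⟩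
    filter_upwards [m1, m2, mJ] with t h1U h2U hJt
    have e1 : h1 t = g t := (hSU _ ⟨hg1 t hJt.1, h1U⟩).2
    have e2 : h2 t = g t := (hSU _ ⟨hg2 t hJt.2, h2U⟩).2
    exact ⟨hJt, by rw [e1, e2]⟩
  have hT'open : IsOpen T' := by
    rw [isOpen_iff_mem_nhds]
    rintro x ⟨⟨hx1, hx2⟩, hxe⟩
    have c : ContinuousAt (fun t => h1 t - h2 t) x :=
      (hh1.continuousAt (hJ1o.mem_nhds hx1)).sub (hh2.continuousAt (hJ2o.mem_nhds hx2))
    have hne : ∀ᶠ t in 𝓝 x, h1 t - h2 t ≠ 0 := c.eventually_ne (sub_ne_zero.mpr hxe)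
    filter_upwards [hne, hJ1o.mem_nhds hx1, hJ2o.mem_nhds hx2] with t ht h1t h2t
    exact ⟨⟨h1t, h2t⟩, sub_ne_zero.mp ht⟩
  intro x hx1 hx2
  by_contra hne
  have hpre : IsPreconnected (J1 ∩ J2) := (hJ1c.inter hJ2c).isPreconnected
  have hsub : J1 ∩ J2 ⊆ T ∪ T' := by
    rintro y ⟨hy1, hy2⟩
    by_cases hcase : h1 y = h2 y
    · exact Or.inl ⟨⟨hy1, hy2⟩, hcase⟩
    · exact Or.inr ⟨⟨hy1, hy2⟩, hcase⟩
  obtain ⟨z, _, hzT, hzT'⟩ :=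
    hpre T T' hTopen hT'open hsub ⟨t₀, ⟨ht₀1, ht₀2⟩, ⟨⟨ht₀1, ht₀2⟩, heq0⟩⟩
      ⟨x, ⟨hx1, hx2⟩, ⟨⟨hx1, hx2⟩, hne⟩⟩
  exact hzT'.2 hzT.2
private lemma continuation (S : Set (ℝ × ℝ)) (h0S : ((0:ℝ), (0:ℝ)) ∈ S)
    (key : ∀ p ∈ connectedComponentIn S ((0:ℝ), (0:ℝ)),
      ∃ (U : Set (ℝ × ℝ)) (I : Set ℝ) (g : ℝ → ℝ),
        IsOpen U ∧ p ∈ U ∧ IsOpen I ∧ I.OrdConnected ∧ p.1 ∈ I ∧ ContinuousOn g I ∧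
        g p.1 = p.2 ∧ (∀ t ∈ I, (t, g t) ∈ S) ∧ (∀ q ∈ S ∩ U, q.1 ∈ I ∧ q.2 = g q.1)) :
    ∃ (J : Set ℝ) (h : ℝ → ℝ),
      IsOpen J ∧ J.OrdConnected ∧ (0:ℝ) ∈ J ∧ ContinuousOn h J ∧ h 0 = 0 ∧
      connectedComponentIn S ((0:ℝ), (0:ℝ)) = {p : ℝ × ℝ | p.1 ∈ J ∧ p.2 = h p.1} ∧
      (∀ (I : Set ℝ) (g : ℝ → ℝ), IsOpen I → I.OrdConnected → ContinuousOn g I →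
        (∀ t ∈ I, (t, g t) ∈ S) → (∃ t₀, t₀ ∈ J ∧ t₀ ∈ I ∧ h t₀ = g t₀) →
        I ⊆ J ∧ ∀ t ∈ I, g t = h t) := by
  classical
  have hΓdef : connectedComponentIn S ((0:ℝ), (0:ℝ)) = connectedComponentIn S ((0:ℝ), (0:ℝ)) := rfl
  set Γ : Set (ℝ × ℝ) := connectedComponentIn S ((0:ℝ), (0:ℝ)) with hΓ
  set J : Set ℝ := {x | ∃ J' h', Sol S J' h' ∧ x ∈ J'} with hJdef
  set h : ℝ → ℝ := fun x =>
    if hx : ∃ J' h', Sol S J' h' ∧ x ∈ J' then hx.choose_spec.choose x else 0 with hhdef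
  -- graphs of solutions lie in Γ
  have solΓ : ∀ J' h', Sol S J' h' → ∀ x ∈ J', (x, h' x) ∈ Γ := by
    rintro J' h' ⟨ho, hc, h0, hcont, h00, hgS⟩
    refine graph_subset_component hΓ hc hcont hgS h0 ?_
    rw [h00, hΓ]
    exact mem_connectedComponentIn h0S
  -- the chosen function agrees with every solution
  have consist : ∀ (x : ℝ) (J' : Set ℝ) (h' : ℝ → ℝ), Sol S J' h' → x ∈ J' → h x = h' x := by
    intro x J' h' hsol hx
    have hxJ : ∃ J'' h'', Sol S J'' h'' ∧ x ∈ J'' := ⟨J', h', hsol, hx⟩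
    obtain ⟨hsol2, hx2⟩ := hxJ.choose_spec.choose_spec
    have hval : h x = hxJ.choose_spec.choose x := by
      rw [hhdef]; exact dif_pos hxJ
    rw [hval]
    exact agree S Γ key hxJ.choose J' hxJ.choose_spec.choose h' hsol2.1 hsol2.2.1
      hsol2.2.2.2.1 hsol2.2.2.2.2.2 (solΓ _ _ hsol2) hsol.1 hsol.2.1 hsol.2.2.2.1
      hsol.2.2.2.2.2 0 hsol2.2.2.1 hsol.2.2.1
      (by rw [hsol2.2.2.2.2.1, hsol.2.2.2.2.1]) x hx2 hx
  have hJmem : ∀ (J' : Set ℝ) (h' : ℝ → ℝ), Sol S J' h' → J' ⊆ J := by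
    intro J' h' hsol y hy
    exact ⟨J', h', hsol, hy⟩
  -- a first solution through the origin
  have h0J : (0:ℝ) ∈ J := by
    obtain ⟨U, I, g, hUo, hpU, hIo, hIc, hxI, hgc, hgp, hgS, hSU⟩ :=
      key ((0:ℝ), (0:ℝ)) (mem_connectedComponentIn h0S)
    exact ⟨I, g, ⟨hIo, hIc, hxI, hgc, hgp, hgS⟩, hxI⟩
  have hJo : IsOpen J := by
    rw [isOpen_iff_mem_nhds]
    rintro x ⟨J', h', hsol, hx⟩
    filter_upwards [hsol.1.mem_nhds hx] with y hy
    exact ⟨J', h', hsol, hy⟩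
  have hJc : J.OrdConnected := by
    constructor
    rintro a ⟨Ja, ha', hsola, haJ⟩ b ⟨Jb, hb', hsolb, hbJ⟩ z hz
    rcases le_or_gt z 0 with hz0 | hz0
    · exact hJmem Ja ha' hsola (hsola.2.1.out haJ hsola.2.2.1 ⟨hz.1, hz0⟩)
    · exact hJmem Jb hb' hsolb (hsolb.2.1.out hsolb.2.2.1 hbJ ⟨hz0.le, hz.2⟩)
  have hgraphS : ∀ x ∈ J, (x, h x) ∈ S := by
    rintro x ⟨J', h', hsol, hx⟩
    rw [consist x J' h' hsol hx]
    exact hsol.2.2.2.2.2 x hx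
  have hcont : ContinuousOn h J := by
    rintro x ⟨J', h', hsol, hx⟩
    have hev : h' =ᶠ[𝓝 x] h :=
      eventually_of_mem (hsol.1.mem_nhds hx) (fun y hy => (consist y J' h' hsol hy).symm)
    exact ((hsol.2.2.2.1.continuousAt (hsol.1.mem_nhds hx)).congr hev).continuousWithinAt
  have h00 : h 0 = 0 := by
    rcases h0J with ⟨J', h', hsol, h0'⟩
    rw [consist 0 J' h' hsol h0', hsol.2.2.2.2.1]
  have SolJ : Sol S J h := ⟨hJo, hJc, h0J, hcont, h00, hgraphS⟩
  -- absorption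
  have absorb : ∀ (I : Set ℝ) (g : ℝ → ℝ), IsOpen I → I.OrdConnected → ContinuousOn g I →
      (∀ t ∈ I, (t, g t) ∈ S) → (∃ t₀, t₀ ∈ J ∧ t₀ ∈ I ∧ h t₀ = g t₀) →
      I ⊆ J ∧ ∀ t ∈ I, g t = h t := by
    rintro I g hIo hIc hgc hgS ⟨t₀, ht₀J, ht₀I, ht₀e⟩
    have heqJI : ∀ t, t ∈ J → t ∈ I → h t = g t :=
      agree S Γ key J I h g hJo hJc hcont hgraphS (solΓ J h SolJ) hIo hIc hgc hgS
        t₀ ht₀J ht₀I ht₀e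
    set h'' : ℝ → ℝ := fun t => if t ∈ J then h t else g t with hh''
    have hIe : ∀ t ∈ I, h'' t = g t := by
      intro t ht
      by_cases hJt : t ∈ J
      · simp only [hh'', if_pos hJt]; exact heqJI t hJt ht
      · simp only [hh'', if_neg hJt]
    have hJe : ∀ t ∈ J, h'' t = h t := by
      intro t ht; simp only [hh'', if_pos ht]
    have hsol'' : Sol S (J ∪ I) h'' := by
      refine ⟨hJo.union hIo, ?_, Or.inl h0J, ?_, by rw [hJe 0 h0J, h00], ?_⟩
      · constructor
        rintro a (haJ | haI) b (hbJ | hbI) z hz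
        · exact Or.inl (hJc.out haJ hbJ hz)
        · rcases le_or_gt z t₀ with hle | hlt
          · exact Or.inl (hJc.out haJ ht₀J ⟨hz.1, hle⟩)
          · exact Or.inr (hIc.out ht₀I hbI ⟨hlt.le, hz.2⟩)
        · rcases le_or_gt z t₀ with hle | hlt
          · exact Or.inr (hIc.out haI ht₀I ⟨hz.1, hle⟩)
          · exact Or.inl (hJc.out ht₀J hbJ ⟨hlt.le, hz.2⟩)
        · exact Or.inr (hIc.out haI hbI hz)
      · rintro t (htJ | htI)
        · have hev : h =ᶠ[𝓝 t] h'' :=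
            eventually_of_mem (hJo.mem_nhds htJ) (fun y hy => (hJe y hy).symm)
          exact ((hcont.continuousAt (hJo.mem_nhds htJ)).congr hev).continuousWithinAt
        · have hev : g =ᶠ[𝓝 t] h'' :=
            eventually_of_mem (hIo.mem_nhds htI) (fun y hy => (hIe y hy).symm)
          exact ((hgc.continuousAt (hIo.mem_nhds htI)).congr hev).continuousWithinAt
      · rintro x (hxJ | hxI)
        · rw [hJe x hxJ]; exact hgraphS x hxJ
        · rw [hIe x hxI]; exact hgS x hxI
    have hIJ : I ⊆ J := fun t ht => hJmem _ _ hsol'' (Or.inr ht)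
    exact ⟨hIJ, fun t ht => (heqJI t (hIJ ht) ht).symm⟩
  -- Γ is the graph of h
  have hgraphΓ : Γ = {p : ℝ × ℝ | p.1 ∈ J ∧ p.2 = h p.1} := by
    apply Subset.antisymm
    · set G : Set (ℝ × ℝ) := {p : ℝ × ℝ | p.1 ∈ J ∧ p.2 = h p.1} with hG
      choose U I g hUo hqU hIo hIc hq1I hgc hgq hgS hSU using key
      set u : Set (ℝ × ℝ) := ⋃ (q : ℝ × ℝ), ⋃ (hq : q ∈ Γ), ⋃ (_ : q ∈ G), U q hq with hu
      set v : Set (ℝ × ℝ) := ⋃ (q : ℝ × ℝ), ⋃ (hq : q ∈ Γ), ⋃ (_ : q ∉ G), U q hq with hv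
      have huo : IsOpen u := isOpen_iUnion fun q => isOpen_iUnion fun hq =>
        isOpen_iUnion fun _ => hUo q hq
      have hvo : IsOpen v := isOpen_iUnion fun q => isOpen_iUnion fun hq =>
        isOpen_iUnion fun _ => hUo q hq
      have hcover : Γ ⊆ u ∪ v := by
        intro q hq
        by_cases hqG : q ∈ G
        · exact Or.inl (mem_iUnion.mpr ⟨q, mem_iUnion.mpr ⟨hq, mem_iUnion.mpr ⟨hqG, hqU q hq⟩⟩⟩)
        · exact Or.inr (mem_iUnion.mpr ⟨q, mem_iUnion.mpr ⟨hq, mem_iUnion.mpr ⟨hqG, hqU q hq⟩⟩⟩)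
      -- absorption at a point q whose graph data shares a point with J
      have habs : ∀ (q : ℝ × ℝ) (hq : q ∈ Γ) (t : ℝ), t ∈ J → t ∈ I q hq →
          h t = g q hq t → I q hq ⊆ J ∧ ∀ s ∈ I q hq, g q hq s = h s := by
        intro q hq t htJ htI hte
        exact absorb (I q hq) (g q hq) (hIo q hq) (hIc q hq) (hgc q hq) (hgS q hq)
          ⟨t, htJ, htI, hte⟩
      have hΓS' : Γ ⊆ S := connectedComponentIn_subset _ _
      have hmemI : ∀ (q : ℝ × ℝ) (hq : q ∈ Γ) (r : ℝ × ℝ), r ∈ Γ → r ∈ U q hq →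
          r.1 ∈ I q hq ∧ r.2 = g q hq r.1 := fun q hq r hr hrU => hSU q hq r ⟨hΓS' hr, hrU⟩
      have hmu : ∀ r ∈ Γ ∩ u, r ∈ G := by
        rintro r ⟨hrΓ, hru⟩
        rw [hu] at hru
        simp only [mem_iUnion] at hru
        obtain ⟨q, hqΓ, hqG, hrU⟩ := hru
        obtain ⟨hIsub, hIeq⟩ := habs q hqΓ q.1 hqG.1 (hq1I q hqΓ)
          (by rw [hgq q hqΓ, hqG.2])
        obtain ⟨hr1, hr2⟩ := hmemI q hqΓ r hrΓ hrU
        exact ⟨hIsub hr1, by rw [hr2, hIeq r.1 hr1]⟩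
      have hmv : ∀ r ∈ Γ ∩ v, r ∉ G := by
        rintro r ⟨hrΓ, hrv⟩ hrG
        rw [hv] at hrv
        simp only [mem_iUnion] at hrv
        obtain ⟨q, hqΓ, hqG, hrU⟩ := hrv
        obtain ⟨hr1, hr2⟩ := hmemI q hqΓ r hrΓ hrU
        obtain ⟨hIsub, hIeq⟩ := habs q hqΓ r.1 hrG.1 hr1 (by rw [← hr2, hrG.2])
        exact hqG ⟨hIsub (hq1I q hqΓ), by rw [← hgq q hqΓ, hIeq q.1 (hq1I q hqΓ)]⟩
      intro q hqΓ
      by_contra hqG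
      have h0G : ((0:ℝ), (0:ℝ)) ∈ Γ ∩ u := by
        have h0Γ : ((0:ℝ), (0:ℝ)) ∈ Γ := mem_connectedComponentIn h0S
        have h0G' : ((0:ℝ), (0:ℝ)) ∈ G := ⟨h0J, h00.symm⟩
        exact ⟨h0Γ, mem_iUnion.mpr ⟨((0:ℝ),(0:ℝ)), mem_iUnion.mpr ⟨h0Γ,
          mem_iUnion.mpr ⟨h0G', hqU _ h0Γ⟩⟩⟩⟩
      have hqv : q ∈ Γ ∩ v :=
        ⟨hqΓ, mem_iUnion.mpr ⟨q, mem_iUnion.mpr ⟨hqΓ, mem_iUnion.mpr ⟨hqG, hqU q hqΓ⟩⟩⟩⟩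
      obtain ⟨r, hrΓ, hru, hrv⟩ :=
        isPreconnected_connectedComponentIn u v huo hvo hcover
          ⟨((0:ℝ),(0:ℝ)), h0G.1, h0G.2⟩ ⟨q, hqv.1, hqv.2⟩
      exact hmv r ⟨hrΓ, hrv⟩ (hmu r ⟨hrΓ, hru⟩)
    · rintro ⟨x, y⟩ ⟨hxJ, hy⟩
      have : y = h x := hy
      rw [show ((x, y) : ℝ × ℝ) = (x, h x) by rw [this]]
      exact solΓ J h SolJ x hxJ
  exact ⟨J, h, hJo, hJc, h0J, hcont, h00, hgraphΓ, absorb⟩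
private lemma ift_key (Ω : Set (ℝ × ℝ)) (hΩopen : IsOpen Ω) (f : ℝ × ℝ → ℝ)
    (hf : ContDiffOn ℝ 1 f Ω) (p : ℝ × ℝ) (hpΩ : p ∈ Ω) (hfp : f p = 0)
    (hbne : fderiv ℝ f p ((0:ℝ), (1:ℝ)) ≠ 0) :
    ∃ (U : Set (ℝ × ℝ)) (I : Set ℝ) (g : ℝ → ℝ),
      IsOpen U ∧ p ∈ U ∧ IsOpen I ∧ I.OrdConnected ∧ p.1 ∈ I ∧ ContinuousOn g I ∧
      g p.1 = p.2 ∧ (∀ t ∈ I, (t, g t) ∈ {q ∈ Ω | f q = 0}) ∧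
      (∀ q ∈ {q ∈ Ω | f q = 0} ∩ U, q.1 ∈ I ∧ q.2 = g q.1) ∧
      HasDerivAt g (-(fderiv ℝ f p ((1:ℝ), (0:ℝ)) / fderiv ℝ f p ((0:ℝ), (1:ℝ)))) p.1 := by
  classical
  set Df := fderiv ℝ f p with hDf
  set a := Df ((1:ℝ), (0:ℝ)) with ha
  set b := Df ((0:ℝ), (1:ℝ)) with hb
  have hDfapp : ∀ q : ℝ × ℝ, Df q = q.1 * a + q.2 * b := by
    rintro ⟨u, v⟩
    have huv : ((u, v) : ℝ × ℝ) = u • ((1:ℝ), (0:ℝ)) + v • ((0:ℝ), (1:ℝ)) := by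
      simp [Prod.ext_iff]
    show Df (u, v) = u * a + v * b
    conv_lhs => rw [huv]
    rw [map_add, map_smul, map_smul, smul_eq_mul, smul_eq_mul, ← ha, ← hb]
  have hcd : ContDiffAt ℝ 1 f p := hf.contDiffAt (hΩopen.mem_nhds hpΩ)
  have hfd : HasStrictFDerivAt f Df p := hcd.hasStrictFDerivAt one_ne_zero
  set A : (ℝ × ℝ) →L[ℝ] (ℝ × ℝ) := (ContinuousLinearMap.fst ℝ ℝ ℝ).prod Df with hA
  set Binv : (ℝ × ℝ) →ₗ[ℝ] (ℝ × ℝ) :=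
    LinearMap.prod (LinearMap.fst ℝ ℝ ℝ)
      (b⁻¹ • (LinearMap.snd ℝ ℝ ℝ - a • LinearMap.fst ℝ ℝ ℝ)) with hB
  have hAapp : ∀ q : ℝ × ℝ, A q = (q.1, q.1 * a + q.2 * b) := by
    intro q
    rw [hA]
    simp only [ContinuousLinearMap.prod_apply, ContinuousLinearMap.coe_fst']
    rw [hDfapp q]
  have hBapp : ∀ q : ℝ × ℝ, Binv q = (q.1, b⁻¹ * (q.2 - a * q.1)) := by
    intro q
    simp [hB, LinearMap.prod_apply, smul_eq_mul, mul_comm]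
  have hcomp1 : (A : (ℝ × ℝ) →ₗ[ℝ] (ℝ × ℝ)) ∘ₗ Binv = LinearMap.id := by
    apply LinearMap.ext
    intro q
    have h1 : ((A : (ℝ × ℝ) →ₗ[ℝ] (ℝ × ℝ)) ∘ₗ Binv) q = A (Binv q) := rfl
    rw [h1, hBapp, hAapp]
    simp only [LinearMap.id_coe, id_eq]
    apply Prod.ext
    · rfl
    · show q.1 * a + b⁻¹ * (q.2 - a * q.1) * b = q.2
      field_simp
      ring
  have hcomp2 : Binv ∘ₗ (A : (ℝ × ℝ) →ₗ[ℝ] (ℝ × ℝ)) = LinearMap.id := by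
    apply LinearMap.ext
    intro q
    have h1 : (Binv ∘ₗ (A : (ℝ × ℝ) →ₗ[ℝ] (ℝ × ℝ))) q = Binv (A q) := rfl
    rw [h1, hAapp, hBapp]
    simp only [LinearMap.id_coe, id_eq]
    apply Prod.ext
    · rfl
    · show b⁻¹ * (q.1 * a + q.2 * b - a * q.1) = q.2
      field_simp
      ring
  set e : (ℝ × ℝ) ≃ₗ[ℝ] (ℝ × ℝ) := LinearEquiv.ofLinear _ Binv hcomp1 hcomp2 with he
  set E : (ℝ × ℝ) ≃L[ℝ] (ℝ × ℝ) := e.toContinuousLinearEquiv with hE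
  have hEA : (E : (ℝ × ℝ) →L[ℝ] (ℝ × ℝ)) = A := by
    apply ContinuousLinearMap.ext
    intro q
    rfl
  have hEsymm : ∀ q : ℝ × ℝ, E.symm q = Binv q := by
    intro q
    have h1 : ⇑E.symm = ⇑e.symm := by
      rw [hE]; exact LinearEquiv.coe_toContinuousLinearEquiv_symm' e
    rw [h1, he, LinearEquiv.ofLinear_symm_apply]
  have hΦd : HasStrictFDerivAt (fun q : ℝ × ℝ => (q.1, f q)) ((E : (ℝ × ℝ) →L[ℝ] (ℝ × ℝ))) p := by
    rw [hEA, hA]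
    exact (ContinuousLinearMap.fst ℝ ℝ ℝ).hasStrictFDerivAt.prodMk hfd
  set Φ' : OpenPartialHomeomorph (ℝ × ℝ) (ℝ × ℝ) :=
    hΦd.toOpenPartialHomeomorph (fun q : ℝ × ℝ => (q.1, f q)) with hΦ'
  have hcoe : ⇑Φ' = (fun q : ℝ × ℝ => (q.1, f q)) := hΦd.toOpenPartialHomeomorph_coe
  have hpsource : p ∈ Φ'.source := hΦd.mem_toOpenPartialHomeomorph_source
  have hΦp : Φ' p = (p.1, 0) := by rw [hcoe]; simp [hfp]
  have htarget : ((p.1, (0:ℝ)) : ℝ × ℝ) ∈ Φ'.target := by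
    rw [← hΦp]; exact Φ'.map_source hpsource
  have hsymm_p : Φ'.symm (p.1, 0) = p := by rw [← hΦp]; exact Φ'.left_inv hpsource
  set I₀ : Set ℝ := {t : ℝ | ((t, (0:ℝ)) : ℝ × ℝ) ∈ Φ'.target ∧ Φ'.symm (t, 0) ∈ Ω} with hI₀
  set g : ℝ → ℝ := fun t => (Φ'.symm (t, 0)).2 with hg
  have hI₀open : IsOpen I₀ := by
    have hOpen2 : IsOpen (Φ'.target ∩ Φ'.symm ⁻¹' Ω) :=
      Φ'.continuousOn_symm.isOpen_inter_preimage Φ'.open_target hΩopen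
    have heq : I₀ = (fun t : ℝ => ((t, (0:ℝ)) : ℝ × ℝ)) ⁻¹' (Φ'.target ∩ Φ'.symm ⁻¹' Ω) := rfl
    rw [heq]
    exact hOpen2.preimage (continuous_id.prodMk continuous_const)
  have hp1I₀ : p.1 ∈ I₀ := ⟨htarget, by rw [hsymm_p]; exact hpΩ⟩
  have hsymm_eq : ∀ t ∈ I₀, ((t, g t) : ℝ × ℝ) = Φ'.symm (t, 0) := by
    intro t ht
    have h2 : Φ' (Φ'.symm (t, 0)) = (t, 0) := Φ'.right_inv ht.1
    rw [hcoe] at h2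
    have h3 : (Φ'.symm (t, 0)).1 = t := congrArg Prod.fst h2
    exact Prod.ext h3.symm rfl
  have hgS : ∀ t ∈ I₀, ((t, g t) : ℝ × ℝ) ∈ {q ∈ Ω | f q = 0} := by
    intro t ht
    have h2 : Φ' (Φ'.symm (t, 0)) = (t, 0) := Φ'.right_inv ht.1
    rw [hcoe] at h2
    have h4 : f (Φ'.symm (t, 0)) = 0 := congrArg Prod.snd h2
    rw [hsymm_eq t ht]
    exact ⟨ht.2, h4⟩
  have hgp : g p.1 = p.2 := by rw [hg]; simp only; rw [hsymm_p]
  have hgcont : ContinuousOn g I₀ := by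
    have hc : ContinuousOn (fun t : ℝ => Φ'.symm (t, 0)) I₀ :=
      Φ'.continuousOn_symm.comp ((continuous_id.prodMk continuous_const).continuousOn)
        (fun t ht => ht.1)
    exact hc.snd
  have hSU : ∀ q ∈ {q ∈ Ω | f q = 0} ∩ Φ'.source, q.1 ∈ I₀ ∧ q.2 = g q.1 := by
    rintro q ⟨hqS, hqsrc⟩
    have hΦq : Φ' q = (q.1, 0) := by rw [hcoe]; simp [hqS.2]
    have h1 : ((q.1, (0:ℝ)) : ℝ × ℝ) ∈ Φ'.target := by
      rw [← hΦq]; exact Φ'.map_source hqsrc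
    have h2 : Φ'.symm (q.1, 0) = q := by rw [← hΦq]; exact Φ'.left_inv hqsrc
    refine ⟨⟨h1, by rw [h2]; exact hqS.1⟩, ?_⟩
    rw [hg]; simp only; rw [h2]
  -- derivative of g
  have hinv : HasStrictFDerivAt (⇑Φ'.symm) (↑E.symm : (ℝ × ℝ) →L[ℝ] (ℝ × ℝ)) ((p.1, 0) : ℝ × ℝ) := by
    have h1 := hΦd.to_localInverse
    rw [hΦd.localInverse_def] at h1
    rw [hfp] at h1
    exact h1
  have hline : HasDerivAt (fun t : ℝ => ((t, (0:ℝ)) : ℝ × ℝ)) (((1:ℝ), (0:ℝ)) : ℝ × ℝ) p.1 :=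
    (hasDerivAt_id p.1).prodMk (hasDerivAt_const p.1 0)
  have hgd : HasDerivAt (fun t : ℝ => Φ'.symm (t, 0)) (E.symm ((1:ℝ), (0:ℝ))) p.1 :=
    HasFDerivAt.comp_hasDerivAt (f := fun t : ℝ => ((t, (0:ℝ)) : ℝ × ℝ)) p.1 hinv.hasFDerivAt hline
  have hgd2 : HasDerivAt g ((E.symm (((1:ℝ), (0:ℝ)) : ℝ × ℝ)).2) p.1 :=
    (ContinuousLinearMap.snd ℝ ℝ ℝ).hasFDerivAt.comp_hasDerivAt p.1 hgd
  have hval : (E.symm (((1:ℝ), (0:ℝ)) : ℝ × ℝ)).2 = -(a / b) := by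
    rw [hEsymm, hBapp]
    show b⁻¹ * (0 - a * 1) = -(a / b)
    field_simp
    ring
  rw [hval] at hgd2
  -- shrink the interval
  obtain ⟨ε, hε, hball⟩ := Metric.isOpen_iff.mp hI₀open p.1 hp1I₀
  set I : Set ℝ := Ioo (p.1 - ε) (p.1 + ε) with hI
  have hI_sub : I ⊆ I₀ := by
    intro t ht
    apply hball
    rw [Real.ball_eq_Ioo]
    exact ht
  have hp1I : p.1 ∈ I := ⟨by linarith, by linarith⟩
  set U : Set (ℝ × ℝ) := Φ'.source ∩ (I ×ˢ (univ : Set ℝ)) with hU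
  refine ⟨U, I, g, Φ'.open_source.inter (isOpen_Ioo.prod isOpen_univ),
    ⟨hpsource, ⟨hp1I, trivial⟩⟩, isOpen_Ioo, ordConnected_Ioo, hp1I,
    hgcont.mono hI_sub, hgp, fun t ht => hgS t (hI_sub ht), ?_, hgd2⟩
  rintro q ⟨hqS, hqsrc, hqI, -⟩
  exact ⟨hqI, (hSU q ⟨hqS, hqsrc⟩).2⟩
theorem symmetric_equation_gives_smooth_involution
    (Ω : Set (ℝ × ℝ)) (hΩopen : IsOpen Ω) (h0Ω : ((0:ℝ), (0:ℝ)) ∈ Ω)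
    (f : ℝ × ℝ → ℝ) (hf : ContDiffOn ℝ 1 f Ω)
    (hf0 : f (0, 0) = 0)
    (hΩsym : ∀ p : ℝ × ℝ, p ∈ Ω → (p.2, p.1) ∈ Ω)
    (hfsym : ∀ p : ℝ × ℝ, p ∈ Ω → f (p.2, p.1) = f p)
    (Γ : Set (ℝ × ℝ))
    (hΓ : Γ = connectedComponentIn {p ∈ Ω | f p = 0} ((0:ℝ), (0:ℝ)))
    (hd2 : ∀ p ∈ Γ, fderiv ℝ f p (0, 1) ≠ 0) :
    ∃ (J : Set ℝ) (h h' : ℝ → ℝ),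
      IsOpen J ∧ J.OrdConnected ∧ (0:ℝ) ∈ J ∧
      Set.MapsTo h J J ∧
      (∀ x ∈ J, HasDerivAt h (h' x) x) ∧
      ContinuousOn h' J ∧
      h 0 = 0 ∧
      (∀ x ∈ J, h' x < 0) ∧
      (∀ x ∈ J, h (h x) = x) ∧
      Γ = {p : ℝ × ℝ | p.1 ∈ J ∧ p.2 = h p.1} := by
  classical
  set S : Set (ℝ × ℝ) := {p ∈ Ω | f p = 0} with hS
  have hSsub : S ⊆ Ω := fun p hp => hp.1
  have h0S : ((0:ℝ), (0:ℝ)) ∈ S := ⟨h0Ω, hf0⟩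
  have hΓS : Γ ⊆ S := by rw [hΓ]; exact connectedComponentIn_subset _ _
  have h0Γ : ((0:ℝ), (0:ℝ)) ∈ Γ := by rw [hΓ]; exact mem_connectedComponentIn h0S
  -- symmetry of Γ under swap
  have hswapΓ : ∀ p ∈ Γ, ((p.2, p.1) : ℝ × ℝ) ∈ Γ := by
    intro p hp
    have himg : Prod.swap '' Γ ⊆ S := by
      rintro q ⟨r, hr, rfl⟩
      have hrS := hΓS hr
      refine ⟨hΩsym r hrS.1, ?_⟩
      show f (r.2, r.1) = 0
      rw [hfsym r hrS.1]
      exact hrS.2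
    have hpre : IsPreconnected (Prod.swap '' Γ) := by
      rw [hΓ]
      exact isPreconnected_connectedComponentIn.image _ continuous_swap.continuousOn
    have hsub : Prod.swap '' Γ ⊆ connectedComponentIn S ((0:ℝ), (0:ℝ)) :=
      hpre.subset_connectedComponentIn ⟨((0:ℝ), (0:ℝ)), h0Γ, rfl⟩ himg
    rw [hΓ]
    exact hsub ⟨p, hp, rfl⟩
  -- local data from the implicit function theorem
  have key : ∀ p ∈ Γ, ∃ (U : Set (ℝ × ℝ)) (I : Set ℝ) (g : ℝ → ℝ),
      IsOpen U ∧ p ∈ U ∧ IsOpen I ∧ I.OrdConnected ∧ p.1 ∈ I ∧ ContinuousOn g I ∧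
      g p.1 = p.2 ∧ (∀ t ∈ I, (t, g t) ∈ S) ∧ (∀ q ∈ S ∩ U, q.1 ∈ I ∧ q.2 = g q.1) ∧
      HasDerivAt g (-(fderiv ℝ f p ((1:ℝ), (0:ℝ)) / fderiv ℝ f p ((0:ℝ), (1:ℝ)))) p.1 := by
    intro p hp
    exact ift_key Ω hΩopen f hf p (hΓS hp).1 (hΓS hp).2 (hd2 p hp)
  obtain ⟨J, h, hJo, hJc, h0J, hcont, h00, hgraph, absorb⟩ :=
    continuation S h0S (by
      intro p hp
      rw [← hΓ] at hp
      obtain ⟨U, I, g, a1, a2, a3, a4, a5, a6, a7, a8, a9, _⟩ := key p hp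
      exact ⟨U, I, g, a1, a2, a3, a4, a5, a6, a7, a8, a9⟩)
  have hΓgraph : Γ = {p : ℝ × ℝ | p.1 ∈ J ∧ p.2 = h p.1} := by rw [hΓ]; exact hgraph
  have hmemΓ : ∀ x ∈ J, ((x, h x) : ℝ × ℝ) ∈ Γ := by
    intro x hx
    rw [hΓgraph]
    exact ⟨hx, rfl⟩
  have hinv : ∀ x ∈ J, h x ∈ J ∧ h (h x) = x := by
    intro x hx
    have hsw := hswapΓ (x, h x) (hmemΓ x hx)
    rw [hΓgraph] at hsw
    exact ⟨hsw.1, hsw.2.symm⟩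
  set h' : ℝ → ℝ := fun x =>
    -(fderiv ℝ f (x, h x) ((1:ℝ), (0:ℝ)) / fderiv ℝ f (x, h x) ((0:ℝ), (1:ℝ))) with hh'
  have hderiv : ∀ x ∈ J, HasDerivAt h (h' x) x := by
    intro x hx
    obtain ⟨U, I, g, hUo, hpU, hIo, hIc, hxI, hgc, hgx, hgS, hSU, hgd⟩ :=
      key (x, h x) (hmemΓ x hx)
    have hgx' : g x = h x := hgx
    obtain ⟨hIJ, hIeq⟩ := absorb I g hIo hIc hgc hgS ⟨x, hx, hxI, hgx'.symm⟩
    have hev : h =ᶠ[𝓝 x] g :=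
      eventually_of_mem (hIo.mem_nhds hxI) (fun t ht => (hIeq t ht).symm)
    exact hgd.congr_of_eventuallyEq hev
  have h2ne : ∀ x ∈ J, fderiv ℝ f (x, h x) ((0:ℝ), (1:ℝ)) ≠ 0 :=
    fun x hx => hd2 _ (hmemΓ x hx)
  have hh'cont : ContinuousOn h' J := by
    have hfc : ContinuousOn (fderiv ℝ f) Ω := hf.continuousOn_fderiv_of_isOpen hΩopen le_rfl
    have hmap : ContinuousOn (fun x : ℝ => ((x, h x) : ℝ × ℝ)) J := continuousOn_id.prodMk hcont
    have hmapsto : Set.MapsTo (fun x : ℝ => ((x, h x) : ℝ × ℝ)) J Ω :=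
      fun x hx => hSsub (hΓS (hmemΓ x hx))
    have hFc : ContinuousOn (fun x : ℝ => fderiv ℝ f (x, h x)) J := hfc.comp hmap hmapsto
    have h1 : ContinuousOn (fun x : ℝ => fderiv ℝ f (x, h x) ((1:ℝ), (0:ℝ))) J :=
      (ContinuousLinearMap.apply ℝ ℝ (((1:ℝ), (0:ℝ)) : ℝ × ℝ)).continuous.comp_continuousOn hFc
    have h2 : ContinuousOn (fun x : ℝ => fderiv ℝ f (x, h x) ((0:ℝ), (1:ℝ))) J :=
      (ContinuousLinearMap.apply ℝ ℝ (((0:ℝ), (1:ℝ)) : ℝ × ℝ)).continuous.comp_continuousOn hFc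
    exact (h1.div h2 h2ne).neg
  have hne : ∀ x ∈ J, h' x ≠ 0 := by
    intro x hx
    have d1 := hderiv x hx
    have d2 := hderiv (h x) (hinv x hx).1
    have dcomp : HasDerivAt (h ∘ h) (h' (h x) * h' x) x := d2.comp x d1
    have idev : (h ∘ h) =ᶠ[𝓝 x] id :=
      eventually_of_mem (hJo.mem_nhds hx) (fun t ht => (hinv t ht).2)
    have did : HasDerivAt (h ∘ h) 1 x := (hasDerivAt_id x).congr_of_eventuallyEq idev
    have hmul : h' (h x) * h' x = 1 := dcomp.unique did
    intro h0
    rw [h0, mul_zero] at hmul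
    exact zero_ne_one hmul
  have hneg : ∀ x ∈ J, h' x < 0 := by
    by_contra hcon
    push_neg at hcon
    obtain ⟨x₀, hx₀, hx₀'⟩ := hcon
    have hx₀pos : 0 < h' x₀ := lt_of_le_of_ne hx₀' (Ne.symm (hne x₀ hx₀))
    have hpos : ∀ x ∈ J, 0 < h' x := by
      intro x hx
      rcases (hne x hx).lt_or_gt with hlt | hgt
      · exfalso
        have hiv := hJc.isPreconnected.intermediate_value hx hx₀ hh'cont
        obtain ⟨y, hy, hy0⟩ := hiv ⟨hlt.le, hx₀pos.le⟩
        exact hne y hy hy0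
      · exact hgt
    have hmono : StrictMonoOn h J := by
      apply strictMonoOn_of_deriv_pos hJc.convex hcont
      intro x hx
      rw [hJo.interior_eq] at hx
      rw [(hderiv x hx).deriv]
      exact hpos x hx
    have hid : ∀ x ∈ J, h x = x := by
      intro x hx
      rcases lt_trichotomy (h x) x with hlt | heq | hgt
      · exfalso
        have := hmono (hinv x hx).1 hx hlt
        rw [(hinv x hx).2] at this
        linarith
      · exact heq
      · exfalso
        have := hmono hx (hinv x hx).1 hgt
        rw [(hinv x hx).2] at this
        linarith
    have hforall : ∀ᶠ t in 𝓝 (0:ℝ), f (t, t) = 0 := by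
      filter_upwards [hJo.mem_nhds h0J] with t ht
      have hmem := (hΓS (hmemΓ t ht)).2
      rwa [hid t ht] at hmem
    have hfd0 : HasFDerivAt f (fderiv ℝ f ((0:ℝ), (0:ℝ))) ((0:ℝ), (0:ℝ)) :=
      ((hf.contDiffAt (hΩopen.mem_nhds h0Ω)).differentiableAt one_ne_zero).hasFDerivAt
    have hdiag : HasDerivAt (fun t : ℝ => f (t, t))
        (fderiv ℝ f ((0:ℝ), (0:ℝ)) (((1:ℝ), (1:ℝ)) : ℝ × ℝ)) 0 := by
      have hl : HasDerivAt (fun t : ℝ => ((t, t) : ℝ × ℝ)) (((1:ℝ), (1:ℝ)) : ℝ × ℝ) 0 :=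
        (hasDerivAt_id 0).prodMk (hasDerivAt_id 0)
      exact HasFDerivAt.comp_hasDerivAt (f := fun t : ℝ => ((t, t) : ℝ × ℝ)) 0 hfd0 hl
    have hzero : HasDerivAt (fun t : ℝ => f (t, t)) 0 0 := by
      refine (hasDerivAt_const 0 (0:ℝ)).congr_of_eventuallyEq ?_
      filter_upwards [hforall] with t ht
      rw [ht]
    have hsum : fderiv ℝ f ((0:ℝ), (0:ℝ)) (((1:ℝ), (1:ℝ)) : ℝ × ℝ) = 0 := hdiag.unique hzero
    have hsymfd : fderiv ℝ f ((0:ℝ), (0:ℝ)) (((0:ℝ), (1:ℝ)) : ℝ × ℝ)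
        = fderiv ℝ f ((0:ℝ), (0:ℝ)) (((1:ℝ), (0:ℝ)) : ℝ × ℝ) := by
      set σ : (ℝ × ℝ) →L[ℝ] (ℝ × ℝ) :=
        (ContinuousLinearMap.snd ℝ ℝ ℝ).prod (ContinuousLinearMap.fst ℝ ℝ ℝ) with hσ
      have hev : (fun q : ℝ × ℝ => f (q.2, q.1)) =ᶠ[𝓝 (((0:ℝ), (0:ℝ)) : ℝ × ℝ)] f :=
        eventually_of_mem (hΩopen.mem_nhds h0Ω) (fun q hq => hfsym q hq)
      have hswd : HasFDerivAt (fun q : ℝ × ℝ => f (q.2, q.1))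
          ((fderiv ℝ f ((0:ℝ), (0:ℝ))).comp σ) ((0:ℝ), (0:ℝ)) := by
        have hsw : HasFDerivAt (fun q : ℝ × ℝ => ((q.2, q.1) : ℝ × ℝ)) σ ((0:ℝ), (0:ℝ)) :=
          σ.hasFDerivAt
        exact HasFDerivAt.comp (f := fun q : ℝ × ℝ => ((q.2, q.1) : ℝ × ℝ)) ((0:ℝ), (0:ℝ)) hfd0 hsw
      have h2 : HasFDerivAt (fun q : ℝ × ℝ => f (q.2, q.1))
          (fderiv ℝ f ((0:ℝ), (0:ℝ))) ((0:ℝ), (0:ℝ)) := hfd0.congr_of_eventuallyEq hev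
      have hcomp := hswd.unique h2
      have happ := congrArg (fun L : (ℝ × ℝ) →L[ℝ] ℝ => L (((1:ℝ), (0:ℝ)) : ℝ × ℝ)) hcomp
      simpa [hσ] using happ
    have hb0 : fderiv ℝ f ((0:ℝ), (0:ℝ)) (((0:ℝ), (1:ℝ)) : ℝ × ℝ) = 0 := by
      have h11 : (((1:ℝ), (1:ℝ)) : ℝ × ℝ) = ((1:ℝ), (0:ℝ)) + ((0:ℝ), (1:ℝ)) := by
        simp [Prod.ext_iff]
      rw [h11, map_add, ← hsymfd] at hsum
      linarith
    exact hd2 ((0:ℝ), (0:ℝ)) h0Γ hb0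
  exact ⟨J, h, h', hJo, hJc, h0J, fun x hx => (hinv x hx).1, hderiv, hh'cont, h00, hneg,
    fun x hx => (hinv x hx).2, hΓgraph⟩
end

section
/- Every smooth involution h : J → J (C¹, h∘h = id, h(0)=0, h ≠ id, J ∋ 0 open interval) arises as in Proposition 'smooth symmetric equation': specifically, f(x,y) := x + y − h(x) − h(y) is a C¹ symmetric function on J × J with f(0,0) = 0, ∂₂f > 0 everywhere, and f⁻¹(0) equals exactly the graph of h. -/
theorem smooth_involution_from_symmetric_equation
    (J : Set ℝ) (hJopen : IsOpen J) (hJconn : J.OrdConnected) (h0J : (0:ℝ) ∈ J)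
    (h h' : ℝ → ℝ) (hmaps : Set.MapsTo h J J)
    (hderiv : ∀ x ∈ J, HasDerivAt h (h' x) x)
    (hderiv_cont : ContinuousOn h' J)
    (hinv : ∀ x ∈ J, h (h x) = x)
    (h0 : h 0 = 0)
    (hne : ∃ x ∈ J, h x ≠ x)
    (f : ℝ → ℝ → ℝ) (hf : ∀ x y, f x y = x + y - h x - h y) :
    (∀ x y, f x y = f y x) ∧
    f 0 0 = 0 ∧
    (∀ x ∈ J, ∀ y ∈ J, HasDerivAt (fun z => f x z) (1 - h' y) y ∧ 0 < 1 - h' y) ∧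
    {p : ℝ × ℝ | p.1 ∈ J ∧ p.2 ∈ J ∧ f p.1 p.2 = 0} = {p : ℝ × ℝ | p.1 ∈ J ∧ p.2 = h p.1} := by
  -- continuity of h on J
  have hcont : ContinuousOn h J := fun x hx =>
    ((hderiv x hx).continuousAt).continuousWithinAt
  -- h' is nonzero on J (chain rule)
  have hne0 : ∀ y ∈ J, h' y ≠ 0 := by
    intro y hy
    have hhy : h y ∈ J := hmaps hy
    have hchain : HasDerivAt (fun t => h (h t)) (h' (h y) * h' y) y :=
      (hderiv (h y) hhy).comp y (hderiv y hy)
    have hid : HasDerivAt (fun t => h (h t)) 1 y := by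
      have : (fun t => h (h t)) =ᶠ[nhds y] id := by
        filter_upwards [hJopen.mem_nhds hy] with t ht using hinv t ht
      exact (hasDerivAt_id y).congr_of_eventuallyEq this
    have heq : h' (h y) * h' y = 1 := hchain.unique hid
    intro h0'
    rw [h0', mul_zero] at heq
    exact one_ne_zero heq.symm
  -- there is a point where h' = -1 (MVT)
  obtain ⟨x₀, hx₀J, hx₀ne⟩ := hne
  have hexists : ∃ c ∈ J, h' c = -1 := by
    rcases lt_or_gt_of_ne hx₀ne with hlt | hgt
    · -- h x₀ < x₀, MVT on [h x₀, x₀]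
      have hsub : Set.Icc (h x₀) x₀ ⊆ J := by
        intro t ht
        exact hJconn.out (hmaps hx₀J) hx₀J ht
      obtain ⟨c, hc, hc'⟩ := exists_hasDerivAt_eq_slope h h' hlt
        (hcont.mono hsub)
        (fun t ht => hderiv t (hsub (Set.mem_Icc_of_Ioo ht)))
      refine ⟨c, hsub (Set.mem_Icc_of_Ioo hc), ?_⟩
      rw [hc', hinv x₀ hx₀J, div_eq_iff (sub_ne_zero.mpr hlt.ne')]
      ring
    · -- x₀ < h x₀, MVT on [x₀, h x₀]
      have hsub : Set.Icc x₀ (h x₀) ⊆ J := by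
        intro t ht
        exact hJconn.out hx₀J (hmaps hx₀J) ht
      obtain ⟨c, hc, hc'⟩ := exists_hasDerivAt_eq_slope h h' hgt
        (hcont.mono hsub)
        (fun t ht => hderiv t (hsub (Set.mem_Icc_of_Ioo ht)))
      refine ⟨c, hsub (Set.mem_Icc_of_Ioo hc), ?_⟩
      rw [hc', hinv x₀ hx₀J, div_eq_iff (sub_ne_zero.mpr (ne_of_gt hgt))]
      ring
  obtain ⟨c, hcJ, hc1⟩ := hexists
  -- h' is negative everywhere on J (IVT + never zero)
  have hneg : ∀ y ∈ J, h' y < 0 := by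
    intro y hy
    by_contra hpos
    push_neg at hpos
    have hpos' : 0 < h' y := lt_of_le_of_ne hpos (Ne.symm (hne0 y hy))
    have hsub : Set.uIcc c y ⊆ J := by
      rw [Set.ordConnected_iff_uIcc_subset] at hJconn
      exact hJconn hcJ hy
    have h0mem : (0:ℝ) ∈ Set.uIcc (h' c) (h' y) := by
      rw [Set.mem_uIcc]
      left
      constructor
      · rw [hc1]; norm_num
      · exact hpos'.le
    have := intermediate_value_uIcc (hderiv_cont.mono hsub) h0mem
    obtain ⟨z, hz, hz0⟩ := this
    exact hne0 z (hsub hz) hz0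
  have hlt1 : ∀ y ∈ J, 0 < 1 - h' y := fun y hy => by linarith [hneg y hy]
  -- g(t) = t - h t is strictly monotone on J
  have hconv : Convex ℝ J := convex_iff_ordConnected.mpr hJconn
  have hgderiv : ∀ y ∈ J, HasDerivAt (fun t => t - h t) (1 - h' y) y :=
    fun y hy => (hasDerivAt_id y).sub (hderiv y hy)
  have hgmono : StrictMonoOn (fun t => t - h t) J := by
    apply strictMonoOn_of_deriv_pos hconv
    · exact fun y hy => ((hgderiv y hy).continuousAt).continuousWithinAt
    · intro y hy
      rw [hJopen.interior_eq] at hy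
      rw [(hgderiv y hy).deriv]
      exact hlt1 y hy
  refine ⟨?_, ?_, ?_, ?_⟩
  · intro x y; rw [hf, hf]; ring
  · rw [hf, h0]; ring
  · intro x hx y hy
    refine ⟨?_, hlt1 y hy⟩
    have : (fun z => f x z) = fun z => (x - h x) + (z - h z) := by
      funext z; rw [hf]; ring
    rw [this]
    exact (hgderiv y hy).const_add (x - h x)
  · ext ⟨x, y⟩
    simp only [Set.mem_setOf_eq]
    constructor
    · rintro ⟨hx, hy, hfxy⟩
      refine ⟨hx, ?_⟩
      have hhx : h x ∈ J := hmaps hx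
      have key : y - h y = h x - h (h x) := by
        rw [hinv x hx, hf] at *
        linarith
      exact hgmono.injOn hy hhx key
    · rintro ⟨hx, rfl⟩
      refine ⟨hx, hmaps hx, ?_⟩
      rw [hf, hinv x hx]
      ring
end

section
/- If V : J → ℝ is a C⁴ potential with V(0) = 0, V'(0) = 0, V''(0) > 0, which is isochronous, i.e., V(x) = (ω²/8)(x − h(x))² for a C⁴ involution h with h(0)=0 and ω² = V''(0), then V⁽⁴⁾(0) = 5 V'''(0)² / (3 V''(0)). -/
theorem isochronous_fourth_derivative_condition
    (J : Set ℝ) (hJopen : IsOpen J) (hJconn : J.OrdConnected) (h0J : (0:ℝ) ∈ J)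
    (h : ℝ → ℝ) (hmaps : Set.MapsTo h J J)
    (hsmooth : ContDiffOn ℝ 4 h J)
    (hinv : ∀ x ∈ J, h (h x) = x)
    (h0 : h 0 = 0)
    (hne : ∃ x ∈ J, h x ≠ x)
    (ω : ℝ) (hω : 0 < ω)
    (V : ℝ → ℝ) (hV : ∀ x ∈ J, V x = ω^2 / 8 * (x - h x)^2)
    (hV2 : 0 < iteratedDeriv 2 V 0) :
    iteratedDeriv 4 V 0 = 5 * (iteratedDeriv 3 V 0)^2 / (3 * iteratedDeriv 2 V 0) := by
  set c : ℝ := ω ^ 2 / 8 with hc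
  have hcpos : 0 < c := by positivity
  set h1 := deriv h with hh1
  set h2 := deriv h1 with hh2
  set h3 := deriv h2 with hh3
  -- differentiability
  have c1 : ContDiffOn ℝ 3 h1 J := hsmooth.deriv_of_isOpen hJopen (by norm_num)
  have c2 : ContDiffOn ℝ 2 h2 J := c1.deriv_of_isOpen hJopen (by norm_num)
  have c3 : ContDiffOn ℝ 1 h3 J := c2.deriv_of_isOpen hJopen (by norm_num)
  have d1 : ∀ x ∈ J, HasDerivAt h (h1 x) x := fun x hx =>
    ((hsmooth.differentiableOn (by norm_num)).differentiableAt (hJopen.mem_nhds hx)).hasDerivAt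
  have d2 : ∀ x ∈ J, HasDerivAt h1 (h2 x) x := fun x hx =>
    ((c1.differentiableOn (by norm_num)).differentiableAt (hJopen.mem_nhds hx)).hasDerivAt
  have d3 : ∀ x ∈ J, HasDerivAt h2 (h3 x) x := fun x hx =>
    ((c2.differentiableOn (by norm_num)).differentiableAt (hJopen.mem_nhds hx)).hasDerivAt
  have d4 : ∀ x ∈ J, HasDerivAt h3 (deriv h3 x) x := fun x hx =>
    ((c3.differentiableOn (by norm_num)).differentiableAt (hJopen.mem_nhds hx)).hasDerivAt
  -- involution identities
  have inv1 : ∀ x ∈ J, h1 (h x) * h1 x = 1 := by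
    intro x hx
    have hcomp : HasDerivAt (fun y => h (h y)) (h1 (h x) * h1 x) x :=
      (d1 _ (hmaps hx)).comp x (d1 x hx)
    have hid : HasDerivAt (fun y => h (h y)) 1 x := by
      refine (hasDerivAt_id x).congr_of_eventuallyEq ?_
      filter_upwards [hJopen.mem_nhds hx] with y hy using (hinv y hy)
    exact hcomp.unique hid
  have inv2 : ∀ x ∈ J, h2 (h x) * h1 x ^ 2 + h1 (h x) * h2 x = 0 := by
    intro x hx
    have hcomp : HasDerivAt (fun y => h1 (h y) * h1 y)
        (h2 (h x) * h1 x * h1 x + h1 (h x) * h2 x) x :=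
      (((d2 _ (hmaps hx)).comp x (d1 x hx))).mul (d2 x hx)
    have hzero : HasDerivAt (fun y => h1 (h y) * h1 y) 0 x := by
      refine (hasDerivAt_const x (1:ℝ)).congr_of_eventuallyEq ?_
      filter_upwards [hJopen.mem_nhds hx] with y hy using (inv1 y hy)
    have := hcomp.unique hzero
    nlinarith [this]
  -- derivative of the second identity at 0
  have inv3 : h3 0 * h1 0 * h1 0 ^ 2 + h2 0 * (2 * h1 0 * h2 0)
      + (h2 0 * h1 0) * h2 0 + h1 0 * h3 0 = 0 := by
    have h0J' := hmaps h0J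
    have hcomp : HasDerivAt (fun y => h2 (h y) * h1 y ^ 2 + h1 (h y) * h2 y)
        (h3 (h 0) * h1 0 * h1 0 ^ 2 + h2 (h 0) * (2 * h1 0 * h2 0)
          + ((h2 (h 0) * h1 0) * h2 0 + h1 (h 0) * h3 0)) 0 := by
      have := (((d3 _ h0J').comp 0 (d1 0 h0J)).mul ((d2 0 h0J).pow 2)).add
        (((d2 _ h0J').comp 0 (d1 0 h0J)).mul (d3 0 h0J))
      refine this.congr_deriv ?_
      simp only [Function.comp_apply, Pi.pow_apply]
      push_cast
      ring
    have hzero : HasDerivAt (fun y => h2 (h y) * h1 y ^ 2 + h1 (h y) * h2 y) 0 0 := by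
      refine (hasDerivAt_const 0 (0:ℝ)).congr_of_eventuallyEq ?_
      filter_upwards [hJopen.mem_nhds h0J] with y hy using (inv2 y hy)
    have := hcomp.unique hzero
    rw [h0] at this
    nlinarith [this]
  set a := h1 0 with ha
  set b := h2 0 with hb
  set e := h3 0 with he
  have ha2 : a * a = 1 := by have := inv1 0 h0J; rwa [h0, ← ha] at this
  -- the ψ chain
  set ψ1 : ℝ → ℝ := fun x => 2 * c * (x - h x) * (1 - h1 x) with hψ1
  set ψ2 : ℝ → ℝ := fun x => 2 * c * ((1 - h1 x) ^ 2 - (x - h x) * h2 x) with hψ2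
  set ψ3 : ℝ → ℝ := fun x => 2 * c * (-3 * (1 - h1 x) * h2 x - (x - h x) * h3 x) with hψ3
  have dV : ∀ x ∈ J, deriv V x = ψ1 x := by
    intro x hx
    have hd0 : HasDerivAt (fun y => c * (y - h y) ^ 2)
        (2 * c * (x - h x) * (1 - h1 x)) x := by
      have := ((hasDerivAt_id' (x := x)).sub (d1 x hx)).pow 2 |>.const_mul c
      refine this.congr_deriv ?_
      simp only [Pi.sub_apply, Pi.mul_apply, Pi.pow_apply]
      push_cast
      ring
    have hdV : HasDerivAt V (2 * c * (x - h x) * (1 - h1 x)) x := by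
      refine hd0.congr_of_eventuallyEq ?_
      filter_upwards [hJopen.mem_nhds hx] with y hy using (hV y hy)
    rw [hdV.deriv]
  have dψ1 : ∀ x ∈ J, deriv ψ1 x = ψ2 x := by
    intro x hx
    show deriv (fun y => 2 * c * (y - h y) * (1 - h1 y)) x = ψ2 x
    have hd : HasDerivAt (fun y => 2 * c * (y - h y) * (1 - h1 y))
        (2 * c * ((1 - h1 x) ^ 2 - (x - h x) * h2 x)) x := by
      have := ((((hasDerivAt_id' (x := x)).sub (d1 x hx)).const_mul (2*c)).mul
        ((hasDerivAt_const x (1:ℝ)).sub (d2 x hx)))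
      refine this.congr_deriv ?_
      simp only [Pi.sub_apply, Pi.mul_apply, Pi.pow_apply]
      push_cast
      ring
    rw [hd.deriv]
  have dψ2 : ∀ x ∈ J, deriv ψ2 x = ψ3 x := by
    intro x hx
    show deriv (fun y => 2 * c * ((1 - h1 y) ^ 2 - (y - h y) * h2 y)) x = ψ3 x
    have hd : HasDerivAt (fun y => 2 * c * ((1 - h1 y) ^ 2 - (y - h y) * h2 y))
        (2 * c * (-3 * (1 - h1 x) * h2 x - (x - h x) * h3 x)) x := by
      have := ((((hasDerivAt_const x (1:ℝ)).sub (d2 x hx)).pow 2).sub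
        (((hasDerivAt_id' (x := x)).sub (d1 x hx)).mul (d3 x hx))).const_mul (2*c)
      refine this.congr_deriv ?_
      simp only [Pi.sub_apply, Pi.mul_apply, Pi.pow_apply]
      push_cast
      ring
    rw [hd.deriv]
  have dψ3 : deriv ψ3 0 = 2 * c * (3 * b ^ 2 - 4 * (1 - a) * e) := by
    show deriv (fun y => 2 * c * (-3 * (1 - h1 y) * h2 y - (y - h y) * h3 y)) 0 = _
    have hd : HasDerivAt (fun y => 2 * c * (-3 * (1 - h1 y) * h2 y - (y - h y) * h3 y))
        (2 * c * ((-3 * (0 - h2 0) * h2 0 + -3 * (1 - h1 0) * h3 0)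
          - ((1 - h1 0) * h3 0 + (0 - h 0) * deriv h3 0))) 0 := by
      have := (((((hasDerivAt_const 0 (-3:ℝ)).mul
        ((hasDerivAt_const 0 (1:ℝ)).sub (d2 0 h0J))).mul (d3 0 h0J)).sub
        (((hasDerivAt_id' (x := (0:ℝ))).sub (d1 0 h0J)).mul (d4 0 h0J)))).const_mul (2*c)
      refine this.congr_deriv ?_
      simp only [Pi.sub_apply, Pi.mul_apply, Pi.pow_apply]
      push_cast
      ring
    rw [hd.deriv, h0, ha, hb, he]; ring
  -- iterated derivatives of V at 0
  have evJ : ∀ (f g : ℝ → ℝ), (∀ x ∈ J, f x = g x) → ∀ x ∈ J, deriv f x = deriv g x := by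
    intro f g hfg x hx
    apply Filter.EventuallyEq.deriv_eq
    filter_upwards [hJopen.mem_nhds hx] with y hy using (hfg y hy)
  have e2 : ∀ x ∈ J, deriv (deriv V) x = ψ2 x := by
    intro x hx
    rw [evJ _ _ dV x hx, dψ1 x hx]
  have e3 : ∀ x ∈ J, deriv (deriv (deriv V)) x = ψ3 x := by
    intro x hx
    rw [evJ _ _ e2 x hx, dψ2 x hx]
  have i2 : iteratedDeriv 2 V = deriv (deriv V) := by
    show iteratedDeriv (1+1) V = _
    rw [iteratedDeriv_succ, iteratedDeriv_one]
  have i3 : iteratedDeriv 3 V = deriv (deriv (deriv V)) := by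
    show iteratedDeriv (1+1+1) V = _
    rw [iteratedDeriv_succ, iteratedDeriv_succ, iteratedDeriv_one]
  have i4 : iteratedDeriv 4 V = deriv (deriv (deriv (deriv V))) := by
    show iteratedDeriv (1+1+1+1) V = _
    rw [iteratedDeriv_succ, iteratedDeriv_succ, iteratedDeriv_succ, iteratedDeriv_one]
  have iD2 : iteratedDeriv 2 V 0 = 2 * c * (1 - a) ^ 2 := by
    rw [i2, e2 0 h0J]
    show 2 * c * ((1 - h1 0) ^ 2 - (0 - h 0) * h2 0) = _
    rw [h0, ha]; ring
  have iD3 : iteratedDeriv 3 V 0 = 2 * c * (-3 * (1 - a) * b) := by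
    rw [i3, e3 0 h0J]
    show 2 * c * (-3 * (1 - h1 0) * h2 0 - (0 - h 0) * h3 0) = _
    rw [h0, ha, hb]; ring
  have iD4 : iteratedDeriv 4 V 0 = 2 * c * (3 * b ^ 2 - 4 * (1 - a) * e) := by
    rw [i4, evJ _ _ e3 0 h0J, dψ3]
  -- conclude
  have haA : a = -1 := by
    rcases mul_self_eq_one_iff.1 ha2 with h1a | h1a
    · exfalso
      rw [iD2, h1a] at hV2
      norm_num at hV2
    · exact h1a
  have inv3' : e * a * a ^ 2 + b * (2 * a * b) + b * a * b + a * e = 0 := by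
    rw [ha, hb, he]; exact inv3
  rw [haA] at inv3'
  have he2 : e = -(3 * b ^ 2) / 2 := by linear_combination (-1/2) * inv3'
  rw [iD2, iD3, iD4, haA, he2]
  have hcne : c ≠ 0 := ne_of_gt hcpos
  field_simp
  ring
end
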